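/- Let G be a compact connected Lie group with Lie algebra g = m ⊕ k an Ad(K)-invariant orthogonal decomposition, where k is the Lie algebra of a closed subgroup K. Then for every w ∈ m there exists a unique pair of real-linear maps B^m_w : g → m and B^k_w : g → k such that Id_g = (sin(ad_w)/ad_w) ∘ B^m_w + cos(ad_w) ∘ B^k_w on g. -/

import Mathlib

open scoped RealInnerProductSpace

/-- The operator power series `sin(A)/A = Σ (-1)^p A^(2p)/(2p+1)!`. -/
noncomputable def sincOp {E : Type*} [NormedAddCommGroup E] [NormedSpace ℝ E]
    (A : E →L[ℝ] E) : E →L[ℝ] E :=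
  ∑' p : ℕ, ((-1 : ℝ) ^ p * ((Nat.factorial (2 * p + 1) : ℝ))⁻¹) • A ^ (2 * p)

/-- The operator power series `cos(A) = Σ (-1)^p A^(2p)/(2p)!`. -/
noncomputable def cosOp {E : Type*} [NormedAddCommGroup E] [NormedSpace ℝ E]
    (A : E →L[ℝ] E) : E →L[ℝ] E :=
  ∑' p : ℕ, ((-1 : ℝ) ^ p * ((Nat.factorial (2 * p) : ℝ))⁻¹) • A ^ (2 * p)


open scoped RealInnerProductSpace

section Aux

variable {E : Type*} [NormedAddCommGroup E] [InnerProductSpace ℝ E] [FiniteDimensional ℝ E]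

theorem aux_summable_op (A : E →L[ℝ] E) (d : ℕ → ℝ)
    (hd : ∀ p, |d p| ≤ ((Nat.factorial p : ℝ))⁻¹) :
    Summable (fun p : ℕ => ((-1:ℝ)^p * d p) • A ^ (2*p)) := by
  rcases subsingleton_or_nontrivial E with h | h
  · have hz : ∀ p : ℕ, ((-1:ℝ)^p * d p) • A ^ (2*p) = 0 := fun p => Subsingleton.elim _ _
    rw [funext hz]; exact summable_zero
  · apply Summable.of_norm
    have h2 : Summable (fun p : ℕ => (‖A‖^2)^p / (Nat.factorial p)) :=
      Real.summable_pow_div_factorial _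
    refine Summable.of_nonneg_of_le (fun p => norm_nonneg _) (fun p => ?_) h2
    refine le_trans (norm_smul_le ((-1:ℝ)^p * d p) (A ^ (2*p))) ?_
    calc ‖(-1:ℝ)^p * d p‖ * ‖A ^ (2*p)‖ ≤ (Nat.factorial p : ℝ)⁻¹ * ‖A‖^(2*p) := by
          apply mul_le_mul _ (norm_pow_le _ _) (norm_nonneg _) (by positivity)
          simpa [Real.norm_eq_abs, abs_mul, abs_pow] using hd p
      _ = (‖A‖^2)^p / (Nat.factorial p) := by rw [pow_mul]; ring

theorem aux_hasSum (A : E →L[ℝ] E) (d : ℕ → ℝ)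
    (hd : ∀ p, |d p| ≤ ((Nat.factorial p : ℝ))⁻¹) (x : E) :
    HasSum (fun p : ℕ => ((-1:ℝ)^p * d p) • ((A ^ (2*p)) x))
      ((∑' p : ℕ, ((-1:ℝ)^p * d p) • A ^ (2*p)) x) := by
  have h := (aux_summable_op A d hd).hasSum.mapL (ContinuousLinearMap.apply ℝ E x)
  simpa using h

theorem aux_pow_symm (A : E →L[ℝ] E) (hskew : ∀ x y : E, ⟪A x, y⟫ = -⟪x, A y⟫)
    (p : ℕ) (a b : E) : ⟪(A^(2*p)) a, b⟫ = ⟪a, (A^(2*p)) b⟫ := by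
  have key : ∀ (nn:ℕ) (a b : E), ⟪(A^nn) a, b⟫ = (-1:ℝ)^nn * ⟪a, (A^nn) b⟫ := by
    intro nn
    induction nn with
    | zero => intro a b; simp
    | succ q ih =>
      intro a b
      have hcomm : ∀ c : E, A ((A^q) c) = (A^q) (A c) := by
        intro c
        have hmul : A * A^q = A^q * A := by rw [← pow_succ', ← pow_succ]
        calc A ((A^q) c) = (A * A^q) c := rfl
          _ = (A^q * A) c := by rw [hmul]
          _ = (A^q) (A c) := rfl
      have hs : ∀ c : E, (A^(q+1)) c = A ((A^q) c) := by
        intro c; rw [pow_succ']; rfl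
      rw [hs a, hs b, hskew ((A^q) a) b, ih a (A b), ← hcomm b]
      ring
  rw [key (2*p)]
  simp [pow_mul]

theorem aux_symm (A : E →L[ℝ] E) (d : ℕ → ℝ)
    (hd : ∀ p, |d p| ≤ ((Nat.factorial p : ℝ))⁻¹)
    (hskew : ∀ x y : E, ⟪A x, y⟫ = -⟪x, A y⟫) (x y : E) :
    ⟪(∑' p : ℕ, ((-1:ℝ)^p * d p) • A ^ (2*p)) x, y⟫
      = ⟪x, (∑' p : ℕ, ((-1:ℝ)^p * d p) • A ^ (2*p)) y⟫ := by
  have h1 := (aux_hasSum A d hd x).mapL (innerSL ℝ y)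
  have h2 := (aux_hasSum A d hd y).mapL (innerSL ℝ x)
  have hfun : (fun p : ℕ => (innerSL ℝ y) (((-1:ℝ)^p * d p) • ((A ^ (2*p)) x)))
      = fun p : ℕ => (innerSL ℝ x) (((-1:ℝ)^p * d p) • ((A ^ (2*p)) y)) := by
    funext p
    simp only [innerSL_apply_apply, real_inner_smul_right]
    congr 1
    calc ⟪y, (A ^ (2*p)) x⟫ = ⟪(A ^ (2*p)) x, y⟫ := real_inner_comm _ _
      _ = ⟪x, (A ^ (2*p)) y⟫ := aux_pow_symm A hskew p x y
  rw [hfun] at h1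
  have huniq := h1.unique h2
  simp only [innerSL_apply_apply] at huniq
  rw [real_inner_comm]
  exact huniq

theorem aux_eig (A : E →L[ℝ] E) (d : ℕ → ℝ)
    (hd : ∀ p, |d p| ≤ ((Nat.factorial p : ℝ))⁻¹) {μ : ℝ}
    (hsum : Summable fun p : ℕ => d p * μ^p) {e : E} (he : A (A e) = (-μ) • e) :
    (∑' p : ℕ, ((-1:ℝ)^p * d p) • A ^ (2*p)) e = (∑' p : ℕ, d p * μ^p) • e := by
  have hpow : ∀ p : ℕ, (A^(2*p)) e = ((-μ)^p) • e := by
    intro p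
    induction p with
    | zero => simp
    | succ q ih =>
      have h2 : (A^2) e = (-μ) • e := by rw [sq, ContinuousLinearMap.mul_apply]; exact he
      have : 2*(q+1) = 2*q + 2 := by ring
      rw [this, pow_add, ContinuousLinearMap.mul_apply, h2, map_smul, ih, smul_smul,
        ← pow_succ']
  have h := aux_hasSum A d hd e
  have hfun : (fun p : ℕ => ((-1:ℝ)^p * d p) • ((A^(2*p)) e))
      = fun p : ℕ => (d p * μ^p) • e := by
    funext p
    rw [hpow, smul_smul]
    congr 1
    have hmm : (-1:ℝ)^p * (-μ)^p = μ^p := by rw [← mul_pow]; ring_nf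
    calc (-1:ℝ)^p * d p * (-μ)^p = d p * ((-1:ℝ)^p * (-μ)^p) := by ring
      _ = d p * μ^p := by rw [hmm]
  rw [hfun] at h
  rw [← h.tsum_eq, hsum.tsum_smul_const e]

theorem aux_tsum_pos (d : ℕ → ℝ) (hd0 : ∀ p, 0 ≤ d p) (hd1 : 0 < d 0)
    {μ : ℝ} (hμ : 0 ≤ μ) (hsum : Summable fun p : ℕ => d p * μ^p) :
    0 < ∑' p : ℕ, d p * μ^p := by
  have hle := Summable.le_tsum hsum 0 (fun j _ => mul_nonneg (hd0 j) (pow_nonneg hμ j))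
  simp only [pow_zero, mul_one] at hle
  linarith

theorem aux_summable_scalar (d : ℕ → ℝ) (hd0 : ∀ p, 0 ≤ d p)
    (hd : ∀ p, d p ≤ ((Nat.factorial p : ℝ))⁻¹) {μ : ℝ} (hμ : 0 ≤ μ) :
    Summable fun p : ℕ => d p * μ^p := by
  refine Summable.of_nonneg_of_le (fun p => mul_nonneg (hd0 p) (pow_nonneg hμ p))
    (fun p => ?_) (Real.summable_pow_div_factorial μ)
  calc d p * μ^p ≤ (Nat.factorial p : ℝ)⁻¹ * μ^p :=
        mul_le_mul_of_nonneg_right (hd p) (pow_nonneg hμ p)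
    _ = μ^p / (Nat.factorial p) := by ring

end Aux
theorem statement0 {g : Type*} [NormedAddCommGroup g] [InnerProductSpace ℝ g]
    [FiniteDimensional ℝ g]
    (bracket : g →ₗ[ℝ] g →ₗ[ℝ] g)
    (hLie1 : ∀ x : g, bracket x x = 0)
    (hLie2 : ∀ x y z : g,
      bracket x (bracket y z) = bracket (bracket x y) z + bracket y (bracket x z))
    (hinv : ∀ x y z : g, ⟪bracket x y, z⟫ = - ⟪y, bracket x z⟫)
    (k : Submodule ℝ g) (hkalg : ∀ x ∈ k, ∀ y ∈ k, bracket x y ∈ k)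
    (m : Submodule ℝ g) (hm : m = kᗮ)
    (hAdK : ∀ x ∈ k, ∀ y ∈ m, bracket x y ∈ m)
    (w : g) (hw : w ∈ m) :
    ∃! B : (g →ₗ[ℝ] g) × (g →ₗ[ℝ] g),
      (∀ ξ : g, B.1 ξ ∈ m) ∧ (∀ ξ : g, B.2 ξ ∈ k) ∧
      ∀ ξ : g,
        sincOp (LinearMap.toContinuousLinearMap (bracket w)) (B.1 ξ) +
          cosOp (LinearMap.toContinuousLinearMap (bracket w)) (B.2 ξ) = ξ := by
  classical
  set A : g →L[ℝ] g := LinearMap.toContinuousLinearMap (bracket w) with hA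
  have hAapp : ∀ x, A x = bracket w x := fun x => rfl
  have hskew : ∀ x y : g, ⟪A x, y⟫ = -⟪x, A y⟫ := fun x y => hinv w x y
  -- coefficient sequences
  set d₁ : ℕ → ℝ := fun p => ((Nat.factorial (2*p+1) : ℝ))⁻¹ with hd₁def
  set d₂ : ℕ → ℝ := fun p => ((Nat.factorial (2*p) : ℝ))⁻¹ with hd₂def
  have hd₁0 : ∀ p, 0 ≤ d₁ p := fun p => by positivity
  have hd₂0 : ∀ p, 0 ≤ d₂ p := fun p => by positivity
  have hd₁le : ∀ p, d₁ p ≤ ((Nat.factorial p : ℝ))⁻¹ := by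
    intro p
    apply inv_anti₀ (by positivity)
    exact_mod_cast Nat.factorial_le (by omega)
  have hd₂le : ∀ p, d₂ p ≤ ((Nat.factorial p : ℝ))⁻¹ := by
    intro p
    apply inv_anti₀ (by positivity)
    exact_mod_cast Nat.factorial_le (by omega)
  have hd₁ : ∀ p, |d₁ p| ≤ ((Nat.factorial p : ℝ))⁻¹ := fun p => by
    rw [abs_of_nonneg (hd₁0 p)]; exact hd₁le p
  have hd₂ : ∀ p, |d₂ p| ≤ ((Nat.factorial p : ℝ))⁻¹ := fun p => by
    rw [abs_of_nonneg (hd₂0 p)]; exact hd₂le p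
  have hSdef : sincOp A = ∑' p : ℕ, ((-1:ℝ)^p * d₁ p) • A ^ (2*p) := rfl
  have hCdef : cosOp A = ∑' p : ℕ, ((-1:ℝ)^p * d₂ p) • A ^ (2*p) := rfl
  -- the symmetric operator -ad_w²
  set M : g →ₗ[ℝ] g := -((bracket w).comp (bracket w)) with hMdef
  have hMapp : ∀ x, M x = -(bracket w (bracket w x)) := fun x => rfl
  have hMsym : M.IsSymmetric := by
    intro x y
    show ⟪M x, y⟫ = ⟪x, M y⟫
    have e1 := hinv w (bracket w x) y
    have e2 := hinv w x (bracket w y)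
    rw [hMapp, hMapp, inner_neg_left, inner_neg_right]
    linarith
  obtain ⟨nfin, hn⟩ : ∃ nn, Module.finrank ℝ g = nn := ⟨_, rfl⟩
  set b := hMsym.eigenvectorBasis hn with hbdef
  set μ := hMsym.eigenvalues hn with hμdef
  have hMb : ∀ i, M (b i) = μ i • b i := fun i => by
    exact_mod_cast hMsym.apply_eigenvectorBasis hn i
  have hAAb : ∀ i, A (A (b i)) = (-(μ i)) • b i := by
    intro i
    have h1 := hMb i
    rw [hMapp] at h1
    rw [hAapp, hAapp]
    rw [show bracket w (bracket w (b i)) = -(μ i • b i) by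
      rw [← h1, neg_neg]]
    rw [neg_smul]
  have hbinner : ∀ i, ⟪b i, b i⟫ = (1:ℝ) := by
    intro i
    have hni := b.orthonormal.1 i
    rw [real_inner_self_eq_norm_mul_norm, hni, mul_one]
  have hμ0 : ∀ i, 0 ≤ μ i := by
    intro i
    have h1 : ⟪A (A (b i)), b i⟫ = -(μ i) * ⟪b i, b i⟫ := by
      rw [hAAb i, real_inner_smul_left]
    have h2 : ⟪A (A (b i)), b i⟫ = -⟪A (b i), A (b i)⟫ := hskew (A (b i)) (b i)
    have h3 := hbinner i
    nlinarith [(real_inner_self_nonneg : (0:ℝ) ≤ ⟪A (b i), A (b i)⟫)]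
  -- scalar eigenvalue functions
  set sf : Fin nfin → ℝ := fun i => ∑' p : ℕ, d₁ p * (μ i)^p with hsfdef
  set cf : Fin nfin → ℝ := fun i => ∑' p : ℕ, d₂ p * (μ i)^p with hcfdef
  have hsfsum : ∀ i, Summable fun p : ℕ => d₁ p * (μ i)^p :=
    fun i => aux_summable_scalar d₁ hd₁0 hd₁le (hμ0 i)
  have hcfsum : ∀ i, Summable fun p : ℕ => d₂ p * (μ i)^p :=
    fun i => aux_summable_scalar d₂ hd₂0 hd₂le (hμ0 i)
  have hSb : ∀ i, sincOp A (b i) = sf i • b i := by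
    intro i
    rw [hSdef]
    exact aux_eig A d₁ hd₁ (hsfsum i) (hAAb i)
  have hCb : ∀ i, cosOp A (b i) = cf i • b i := by
    intro i
    rw [hCdef]
    exact aux_eig A d₂ hd₂ (hcfsum i) (hAAb i)
  have hsfpos : ∀ i, 0 < sf i := by
    intro i
    apply aux_tsum_pos d₁ hd₁0 _ (hμ0 i) (hsfsum i)
    simp [hd₁def]
  have hcfpos : ∀ i, 0 < cf i := by
    intro i
    apply aux_tsum_pos d₂ hd₂0 _ (hμ0 i) (hcfsum i)
    simp [hd₂def]
  have hSsymm : ∀ x y : g, ⟪sincOp A x, y⟫ = ⟪x, sincOp A y⟫ := by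
    intro x y; rw [hSdef]; exact aux_symm A d₁ hd₁ hskew x y
  have hCsymm : ∀ x y : g, ⟪cosOp A x, y⟫ = ⟪x, cosOp A y⟫ := by
    intro x y; rw [hCdef]; exact aux_symm A d₂ hd₂ hskew x y
  -- key injectivity
  have hker : ∀ u ζ : g, u ∈ m → ζ ∈ k → sincOp A u + cosOp A ζ = 0 →
      u = 0 ∧ ζ = 0 := by
    intro u ζ hu hζ heq
    have hcoord : ∀ i, sf i * ⟪b i, u⟫ + cf i * ⟪b i, ζ⟫ = 0 := by
      intro i
      have h0 : ⟪b i, sincOp A u + cosOp A ζ⟫ = 0 := by rw [heq, inner_zero_right]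
      rw [inner_add_right] at h0
      have h1 : ⟪b i, sincOp A u⟫ = sf i * ⟪b i, u⟫ := by
        rw [← hSsymm (b i) u, hSb i, real_inner_smul_left]
      have h2 : ⟪b i, cosOp A ζ⟫ = cf i * ⟪b i, ζ⟫ := by
        rw [← hCsymm (b i) ζ, hCb i, real_inner_smul_left]
      rw [h1, h2] at h0
      exact h0
    have huz : ∀ i, ⟪b i, u⟫ = 0 := by
      have horth : ⟪ζ, u⟫ = 0 := by
        rw [hm] at hu
        exact hu ζ hζ
      have hexp : ∑ i, ⟪ζ, b i⟫ * ⟪b i, u⟫ = 0 := by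
        rw [b.sum_inner_mul_inner]; exact horth
      have hterm : ∀ i, ⟪ζ, b i⟫ * ⟪b i, u⟫ = -((sf i / cf i) * ⟪b i, u⟫^2) := by
        intro i
        have hc := hcoord i
        have hci := (hcfpos i).ne'
        have h5 : ⟪ζ, b i⟫ = ⟪b i, ζ⟫ := real_inner_comm _ _
        rw [h5]
        field_simp
        linear_combination ⟪b i, u⟫ * hc
      have hsum0 : ∑ i, (sf i / cf i) * ⟪b i, u⟫^2 = 0 := by
        have : ∑ i, ⟪ζ, b i⟫ * ⟪b i, u⟫ = -(∑ i, (sf i / cf i) * ⟪b i, u⟫^2) := by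
          rw [← Finset.sum_neg_distrib]
          exact Finset.sum_congr rfl fun i _ => hterm i
        rw [this] at hexp
        linarith
      intro i
      have hzero : (sf i / cf i) * ⟪b i, u⟫^2 = 0 :=
        (Finset.sum_eq_zero_iff_of_nonneg fun j _ => mul_nonneg (div_pos (hsfpos j) (hcfpos j)).le (sq_nonneg _)).mp hsum0 i
          (Finset.mem_univ i)
      have hdiv : (0:ℝ) < sf i / cf i := div_pos (hsfpos i) (hcfpos i)
      have := mul_eq_zero.mp hzero
      rcases this with h | h
      · exact absurd h hdiv.ne'
      · exact pow_eq_zero_iff (n := 2) (by norm_num) |>.mp h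
    have hu0 : u = 0 := by
      have hrep := b.sum_repr' u
      rw [← hrep]
      refine Finset.sum_eq_zero fun i _ => ?_
      rw [huz i, zero_smul]
    have hζz : ∀ i, ⟪b i, ζ⟫ = 0 := by
      intro i
      have hc := hcoord i
      rw [huz i, mul_zero, zero_add] at hc
      exact (mul_eq_zero.mp hc).resolve_left (hcfpos i).ne'
    have hζ0 : ζ = 0 := by
      have hrep := b.sum_repr' ζ
      rw [← hrep]
      refine Finset.sum_eq_zero fun i _ => ?_
      rw [hζz i, zero_smul]
    exact ⟨hu0, hζ0⟩
  -- the linear map (u, ζ) ↦ S u + C ζ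
  set L : (m × k) →ₗ[ℝ] g :=
    LinearMap.coprod ((sincOp A : g →ₗ[ℝ] g).comp m.subtype)
      ((cosOp A : g →ₗ[ℝ] g).comp k.subtype) with hLdef
  have hLapp : ∀ x : m × k, L x = sincOp A (x.1 : g) + cosOp A (x.2 : g) :=
    fun x => rfl
  have hLinj : Function.Injective L := by
    intro x y hxy
    have h0 : L (x - y) = 0 := by rw [map_sub, hxy, sub_self]
    rw [hLapp] at h0
    have := hker ((x - y).1 : g) ((x - y).2 : g) (x - y).1.2 (x - y).2.2 h0
    have h1 : (x - y).1 = 0 := Subtype.ext this.1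
    have h2 : (x - y).2 = 0 := Subtype.ext this.2
    have : x - y = 0 := Prod.ext h1 h2
    exact sub_eq_zero.mp this
  have hrank : Module.finrank ℝ (m × k) = Module.finrank ℝ g := by
    rw [Module.finrank_prod, hm, add_comm]
    exact Submodule.finrank_add_finrank_orthogonal k
  set e := L.linearEquivOfInjective hLinj hrank with hedef
  have he : ∀ x, e x = L x := fun x =>
    LinearMap.linearEquivOfInjective_apply hLinj hrank x
  set Bm : g →ₗ[ℝ] g := m.subtype ∘ₗ (LinearMap.fst ℝ m k) ∘ₗ (e.symm : g →ₗ[ℝ] (m × k))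
    with hBmdef
  set Bk : g →ₗ[ℝ] g := k.subtype ∘ₗ (LinearMap.snd ℝ m k) ∘ₗ (e.symm : g →ₗ[ℝ] (m × k))
    with hBkdef
  have hBmmem : ∀ ξ, Bm ξ ∈ m := fun ξ => ((e.symm ξ).1 : m).2
  have hBkmem : ∀ ξ, Bk ξ ∈ k := fun ξ => ((e.symm ξ).2 : k).2
  have hBeq : ∀ ξ, sincOp A (Bm ξ) + cosOp A (Bk ξ) = ξ := by
    intro ξ
    have h1 : L (e.symm ξ) = ξ := by rw [← he, e.apply_symm_apply]
    rw [hLapp] at h1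
    exact h1
  refine ⟨(Bm, Bk), ⟨hBmmem, hBkmem, hBeq⟩, ?_⟩
  rintro ⟨B1', B2'⟩ ⟨h1, h2, h3⟩
  have hkey : ∀ ξ, B1' ξ = Bm ξ ∧ B2' ξ = Bk ξ := by
    intro ξ
    have hz : sincOp A (B1' ξ - Bm ξ) + cosOp A (B2' ξ - Bk ξ) = 0 := by
      rw [map_sub, map_sub, sub_add_sub_comm, h3 ξ, hBeq ξ, sub_self]
    have := hker _ _ (m.sub_mem (h1 ξ) (hBmmem ξ)) (k.sub_mem (h2 ξ) (hBkmem ξ)) hz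
    exact ⟨sub_eq_zero.mp this.1, sub_eq_zero.mp this.2⟩
  refine Prod.ext ?_ ?_
  · ext ξ; exact (hkey ξ).1
  · ext ξ; exact (hkey ξ).2
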